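/- Let w be a random vector in ℝ^Q with distribution s(w) = (1/2)·(N(w | μ, diag(σ²)) + N(−w | μ, diag(σ²))), i.e., a symmetrized Gaussian. Then for any x, x' ∈ ℝ^Q, E[cos(2π wᵀ(x − x'))] = exp(−2π² ‖σ ⊙ (x − x')‖²) · cos(2π μᵀ(x − x')), where ⊙ denotes entrywise product. -/

import Mathlib

open Real MeasureTheory Complex

/-- One-dimensional Gaussian density with mean `μ` and variance `v`. -/
noncomputable def gaussPDF (μ v x : ℝ) : ℝ :=
  (Real.sqrt (2 * Real.pi * v))⁻¹ * Real.exp (-(x - μ) ^ 2 / (2 * v))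

lemma gauss_rw (m v c : ℝ) (hv : v ≠ 0) (x : ℝ) :
    Complex.exp (c * x * Complex.I) * (gaussPDF m v x : ℂ) =
      ((Real.sqrt (2*Real.pi*v))⁻¹ : ℝ) *
        Complex.exp ((-(1/(2*v)) : ℂ) * x^2 + (c*Complex.I + m/v) * x + -(m^2/(2*v))) := by
  unfold gaussPDF
  push_cast
  rw [mul_comm (Complex.exp _), mul_assoc, ← Complex.exp_add]
  congr 1
  have hv' : (v : ℂ) ≠ 0 := by exact_mod_cast hv
  simp only [div_eq_mul_inv, mul_inv]
  ring

lemma gauss_integrable (m v c : ℝ) (hv : 0 < v) :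
    Integrable (fun x : ℝ => Complex.exp (c * x * Complex.I) * (gaussPDF m v x : ℂ)) := by
  simp_rw [gauss_rw m v c hv.ne']
  exact (integrable_cexp_quadratic' (b := -(1/(2*v))) (by simp [hv]) _ _).const_mul _

lemma gauss_char (m v c : ℝ) (hv : 0 < v) :
    ∫ x : ℝ, Complex.exp (c * x * Complex.I) * (gaussPDF m v x : ℂ)
      = Complex.exp (c * m * Complex.I - v * c^2 / 2) := by
  simp_rw [gauss_rw m v c hv.ne']
  rw [integral_const_mul, integral_cexp_quadratic (by simp [hv]) _ _]
  have hv' : (v:ℂ) ≠ 0 := by exact_mod_cast hv.ne'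
  have h1 : ((π:ℂ) / -(-(1/(2*v)))) ^ (1/2 : ℂ) = (Real.sqrt (2*Real.pi*v) : ℂ) := by
    rw [show ((π:ℂ) / -(-(1/(2*↑v)))) = ((2*Real.pi*v : ℝ) : ℂ) by push_cast; field_simp,
      show ((1:ℂ)/2) = ((1/2 : ℝ) : ℂ) by norm_num,
      ← Complex.ofReal_cpow (by positivity)]
    norm_cast
    rw [← Real.sqrt_eq_rpow]
  rw [h1]
  rw [← mul_assoc]
  rw [Complex.ofReal_inv]
  have h2 : ((Real.sqrt (2*Real.pi*v) : ℝ) : ℂ)⁻¹ * (Real.sqrt (2*Real.pi*v) : ℂ) = 1 := by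
    rw [inv_mul_cancel₀]
    exact_mod_cast (Real.sqrt_pos.2 (by positivity)).ne'
  rw [h2, one_mul]
  congr 1
  have : (c*Complex.I + (m:ℂ)/v)^2 = -c^2 + 2*c*m*Complex.I/v + m^2/v^2 := by
    have := Complex.I_sq
    ring_nf
    rw [Complex.I_sq]
    ring
  rw [this]
  have hvi : (v:ℂ) * (v:ℂ)⁻¹ = 1 := mul_inv_cancel₀ hv'
  field_simp
  ring

lemma gaussPDF_integrable (m v : ℝ) (hv : 0 < v) : Integrable (gaussPDF m v) := by
  have h : gaussPDF m v = fun x => (Real.sqrt (2*Real.pi*v))⁻¹ * Real.exp (-(1/(2*v)) * (x - m)^2) := by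
    funext x; unfold gaussPDF; congr 1; ring_nf
  rw [h]
  exact (((integrable_exp_neg_mul_sq (by positivity : (0:ℝ) < 1/(2*v))).comp_sub_right m)).const_mul _

/-- For `w` distributed according to the symmetrized Gaussian density
`s(w) = ½ (N(w | μ, diag σ²) + N(−w | μ, diag σ²))` on `ℝ^Q`, one has
`E[cos(2π wᵀ(x − x'))] = exp(−2π² ‖σ ⊙ (x − x')‖²) cos(2π μᵀ(x − x'))`. -/
theorem expectation_cos_symmetrized_gaussian {Q : ℕ}
    (μ v : Fin Q → ℝ) (hv : ∀ i, 0 < v i) (x x' : Fin Q → ℝ) :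
    ∫ w : Fin Q → ℝ,
        Real.cos (2 * Real.pi * ∑ i, w i * (x i - x' i)) *
          ((1 / 2) * ((∏ i, gaussPDF (μ i) (v i) (w i)) +
            ∏ i, gaussPDF (μ i) (v i) (-(w i))))
      = Real.exp (-2 * Real.pi ^ 2 * ∑ i, v i * (x i - x' i) ^ 2) *
          Real.cos (2 * Real.pi * ∑ i, μ i * (x i - x' i)) := by
  set d : Fin Q → ℝ := fun i => x i - x' i with hd
  have hdi : ∀ i, x i - x' i = d i := fun i => rfl
  simp only [hdi]
  set H : (Fin Q → ℝ) → ℝ := fun w =>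
    Real.cos (2 * Real.pi * ∑ i, w i * d i) * ∏ i, gaussPDF (μ i) (v i) (w i) with hH
  set F : (Fin Q → ℝ) → ℂ := fun w =>
    ∏ i, Complex.exp ((2 * Real.pi * d i : ℝ) * (w i) * Complex.I) *
      (gaussPDF (μ i) (v i) (w i) : ℂ) with hF
  -- integrability
  have hPint : Integrable (fun w : Fin Q → ℝ => ∏ i, gaussPDF (μ i) (v i) (w i)) :=
    Integrable.fintype_prod (fun i => gaussPDF_integrable _ _ (hv i))
  have hcosm : AEStronglyMeasurable (fun w : Fin Q → ℝ =>
      Real.cos (2 * Real.pi * ∑ i, w i * d i)) volume := by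
    apply Continuous.aestronglyMeasurable; fun_prop
  have hHint : Integrable H := by
    apply hPint.bdd_mul (c := 1) hcosm (Filter.Eventually.of_forall fun w => ?_)
    simpa using Real.abs_cos_le_one _
  have hFint : Integrable F :=
    Integrable.fintype_prod (fun i => gauss_integrable _ _ _ (hv i))
  -- step 1: reduce LHS to ∫ H
  have hneg : ∀ w : Fin Q → ℝ, H (-w) =
      Real.cos (2 * Real.pi * ∑ i, w i * d i) * ∏ i, gaussPDF (μ i) (v i) (-(w i)) := by
    intro w
    simp only [hH, Pi.neg_apply]
    have hs : ∑ i, -w i * d i = -∑ i, w i * d i := by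
      rw [← Finset.sum_neg_distrib]; exact Finset.sum_congr rfl fun i _ => by ring
    rw [hs, mul_neg, Real.cos_neg]
  have step1 : (∫ w : Fin Q → ℝ,
        Real.cos (2 * Real.pi * ∑ i, w i * d i) *
          ((1 / 2) * ((∏ i, gaussPDF (μ i) (v i) (w i)) +
            ∏ i, gaussPDF (μ i) (v i) (-(w i))))) = ∫ w, H w := by
    have key : ∀ w : Fin Q → ℝ, Real.cos (2 * Real.pi * ∑ i, w i * d i) *
          ((1 / 2) * ((∏ i, gaussPDF (μ i) (v i) (w i)) +
            ∏ i, gaussPDF (μ i) (v i) (-(w i)))) = (1/2) * H w + (1/2) * H (-w) := by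
      intro w; rw [hneg w]; simp only [hH]; ring
    simp_rw [key]
    rw [integral_add (hHint.const_mul _) ((hHint.comp_neg).const_mul _),
      integral_const_mul, integral_const_mul, integral_neg_eq_self H]
    ring
  rw [step1]
  -- step 2: H w = (F w).re
  have hre : ∀ w, H w = (F w).re := by
    intro w
    simp only [hF]
    rw [Finset.prod_mul_distrib, ← Complex.exp_sum]
    have h1 : ∑ i, ((2 * Real.pi * d i : ℝ) : ℂ) * (w i) * Complex.I
        = ((2 * Real.pi * ∑ i, w i * d i : ℝ) : ℂ) * Complex.I := by
      rw [← Finset.sum_mul]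
      congr 1
      push_cast
      rw [Finset.mul_sum]
      exact Finset.sum_congr rfl fun i _ => by ring
    have h2 : (∏ i, (gaussPDF (μ i) (v i) (w i) : ℂ))
        = ((∏ i, gaussPDF (μ i) (v i) (w i) : ℝ) : ℂ) := by push_cast; rfl
    rw [h1, h2, Complex.mul_re, Complex.exp_ofReal_mul_I_re, Complex.exp_ofReal_mul_I_im,
      Complex.ofReal_re, Complex.ofReal_im, mul_zero, sub_zero]
  simp_rw [hre]
  have hreint := integral_re (𝕜 := ℂ) hFint
  simp only [RCLike.re_to_complex] at hreint
  rw [hreint]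
  -- step 3: compute ∫ F
  have step3 : ∫ w, F w = Complex.exp
      (((- (∑ i, v i * (2 * Real.pi * d i)^2 / 2) : ℝ) : ℂ) +
        ((∑ i, 2 * Real.pi * d i * μ i : ℝ) : ℂ) * Complex.I) := by
    rw [hF]
    beta_reduce
    erw [integral_fintype_prod_eq_prod (μ := fun _ => volume) (f := fun i (y : ℝ) =>
      Complex.exp ((2 * Real.pi * d i : ℝ) * y * Complex.I) * (gaussPDF (μ i) (v i) y : ℂ))]
    rw [Finset.prod_congr rfl (fun i _ => gauss_char (μ i) (v i) (2 * Real.pi * d i) (hv i)),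
      ← Complex.exp_sum]
    congr 1
    rw [Complex.ofReal_neg, neg_add_eq_sub, eq_sub_iff_add_eq']
    push_cast
    rw [← Finset.sum_add_distrib, Finset.sum_mul]
    exact Finset.sum_congr rfl fun i _ => by ring
  rw [step3, Complex.exp_re]
  have hAB : ∀ A B : ℝ, (((A:ℂ) + (B:ℂ) * Complex.I)).re = A ∧
      (((A:ℂ) + (B:ℂ) * Complex.I)).im = B := by intro A B; constructor <;> simp
  rw [(hAB _ _).1, (hAB _ _).2]
  congr 2
  · rw [← Finset.sum_neg_distrib, Finset.mul_sum]
    exact Finset.sum_congr rfl fun i _ => by ring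
  · rw [Finset.mul_sum]
    exact Finset.sum_congr rfl fun i _ => by ring
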